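/- Let I, J ⊂ ℝ be bounded intervals of positive length and let f : I → (0,∞), g : J → (0,∞) be integrable. Let T : closure(I) → closure(J) be the monotone transportation map from f to g, defined by (1/∫_I f)∫_I f(t)1_{t<x} dt = (1/∫_J g)∫_J g(t)1_{t<T(x)} dt. Then T is strictly increasing, absolutely continuous, and for almost every x ∈ I, T'(x) = ((∫_J g)/(∫_I f)) · f(x)/g(T(x)). -/

import Mathlib

open Set MeasureTheory

theorem monotone_transport_properties (a b c d : ℝ) (hab : a < b) (hcd : c < d)
    (f g : ℝ → ℝ)
    (hfpos : ∀ x ∈ Icc a b, 0 < f x) (hgpos : ∀ x ∈ Icc c d, 0 < g x)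
    (hfint : IntegrableOn f (Icc a b)) (hgint : IntegrableOn g (Icc c d))
    (T : ℝ → ℝ) (hTmaps : MapsTo T (Icc a b) (Icc c d))
    (hTdef : ∀ x ∈ Icc a b,
      (∫ t in a..x, f t) / (∫ t in Icc a b, f t) =
      (∫ t in c..T x, g t) / (∫ t in Icc c d, g t)) :
    StrictMonoOn T (Icc a b) ∧
    ∃ T' : ℝ → ℝ, IntegrableOn T' (Icc a b) ∧
      (∀ x ∈ Icc a b, T x = T a + ∫ t in a..x, T' t) ∧
      (∀ᵐ x ∂(volume.restrict (Icc a b)),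
        T' x = ((∫ t in Icc c d, g t) / (∫ t in Icc a b, f t)) * f x / g (T x)) := by
  have hab' : a ≤ b := hab.le
  have hcd' : c ≤ d := hcd.le
  set A := ∫ t in Icc a b, f t with hA_def
  set B := ∫ t in Icc c d, g t with hB_def
  set F := fun x => ∫ t in a..x, f t with hF_def
  set G := fun y => ∫ t in c..y, g t with hG_def
  have hfi' : ∀ x ∈ Icc a b, ∀ y ∈ Icc a b, IntervalIntegrable f volume x y := by
    intro x hx y hy
    exact (hfint.mono_set (uIcc_subset_Icc hx hy)).intervalIntegrable
  have hgi' : ∀ x ∈ Icc c d, ∀ y ∈ Icc c d, IntervalIntegrable g volume x y := by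
    intro x hx y hy
    exact (hgint.mono_set (uIcc_subset_Icc hx hy)).intervalIntegrable
  have ha_mem : a ∈ Icc a b := ⟨le_refl a, hab'⟩
  have hb_mem : b ∈ Icc a b := ⟨hab', le_refl b⟩
  have hc_mem : c ∈ Icc c d := ⟨le_refl c, hcd'⟩
  have hd_mem : d ∈ Icc c d := ⟨hcd', le_refl d⟩
  have hFb : F b = A := by
    show (∫ t in a..b, f t) = A
    rw [hA_def, intervalIntegral.integral_of_le hab', integral_Icc_eq_integral_Ioc]
  have hGd : G d = B := by
    show (∫ t in c..d, g t) = B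
    rw [hB_def, intervalIntegral.integral_of_le hcd', integral_Icc_eq_integral_Ioc]
  have hApos : 0 < A := by
    rw [← hFb]
    exact intervalIntegral.intervalIntegral_pos_of_pos_on (hfi' a ha_mem b hb_mem)
      (fun x hx => hfpos x (Ioo_subset_Icc_self hx)) hab
  have hBpos : 0 < B := by
    rw [← hGd]
    exact intervalIntegral.intervalIntegral_pos_of_pos_on (hgi' c hc_mem d hd_mem)
      (fun x hx => hgpos x (Ioo_subset_Icc_self hx)) hcd
  have hFmono : StrictMonoOn F (Icc a b) := by
    intro x hx y hy hxy
    have h1 : F y - F x = ∫ t in x..y, f t :=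
      intervalIntegral.integral_interval_sub_left (hfi' a ha_mem y hy) (hfi' a ha_mem x hx)
    have h2 : 0 < ∫ t in x..y, f t :=
      intervalIntegral.intervalIntegral_pos_of_pos_on (hfi' x hx y hy)
        (fun t ht => hfpos t ⟨hx.1.trans ht.1.le, ht.2.le.trans hy.2⟩) hxy
    linarith
  have hGmono : StrictMonoOn G (Icc c d) := by
    intro x hx y hy hxy
    have h1 : G y - G x = ∫ t in x..y, g t :=
      intervalIntegral.integral_interval_sub_left (hgi' c hc_mem y hy) (hgi' c hc_mem x hx)
    have h2 : 0 < ∫ t in x..y, g t :=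
      intervalIntegral.intervalIntegral_pos_of_pos_on (hgi' x hx y hy)
        (fun t ht => hgpos t ⟨hx.1.trans ht.1.le, ht.2.le.trans hy.2⟩) hxy
    linarith
  have hFa : F a = 0 := intervalIntegral.integral_same
  have hGc : G c = 0 := intervalIntegral.integral_same
  have key : ∀ x ∈ Icc a b, B * F x = A * G (T x) := by
    intro x hx
    have h := hTdef x hx
    rw [div_eq_div_iff hApos.ne' hBpos.ne'] at h
    linarith
  have hTa : T a = c := by
    have h := key a ha_mem
    rw [hFa, mul_zero] at h
    have hGTa : G (T a) = 0 := by
      have := hApos.ne'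
      field_simp at h
      exact (mul_eq_zero.mp h.symm).resolve_left this
    by_contra hne
    have h1 : c < T a := lt_of_le_of_ne (hTmaps ha_mem).1 (Ne.symm hne)
    have h2 : G c < G (T a) := hGmono hc_mem (hTmaps ha_mem) h1
    rw [hGc, hGTa] at h2
    exact lt_irrefl _ h2
  have hTmono : StrictMonoOn T (Icc a b) := by
    intro x hx y hy hxy
    have h1 : F x < F y := hFmono hx hy hxy
    have h2 : G (T x) < G (T y) := by nlinarith [key x hx, key y hy]
    by_contra h
    push_neg at h
    have : G (T y) ≤ G (T x) := hGmono.monotoneOn (hTmaps hy) (hTmaps hx) h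
    linarith
  refine ⟨hTmono, ?_⟩
  -- continuity of F and the intermediate value property
  have hFcont : ContinuousOn F (Icc a b) := by
    have h := intervalIntegral.continuousOn_primitive_interval (μ := volume) (f := f) (a := a) (b := b)
      (by rwa [uIcc_of_le hab'])
    rwa [uIcc_of_le hab'] at h
  have hGrange : ∀ m ∈ Icc c d, 0 ≤ G m ∧ G m ≤ B := by
    intro m hm
    constructor
    · rw [← hGc]; exact hGmono.monotoneOn hc_mem hm hm.1
    · rw [← hGd]; exact hGmono.monotoneOn hm hd_mem hm.2
  have hsur : ∀ m ∈ Icc c d, ∃ s ∈ Icc a b, B * F s = A * G m := by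
    intro m hm
    have hcont : ContinuousOn (fun x => B * F x) (Icc a b) := continuousOn_const.mul hFcont
    have h1 : A * G m ∈ Icc ((fun x => B * F x) a) ((fun x => B * F x) b) := by
      simp only [hFa, hFb, mul_zero]
      obtain ⟨h2, h3⟩ := hGrange m hm
      constructor
      · positivity
      · nlinarith
    obtain ⟨s, hs, hs2⟩ := intermediate_value_Icc hab' hcont h1
    exact ⟨s, hs, by simpa using hs2⟩
  -- the clamped transport map
  set Tc := fun t : ℝ => T (max a (min t b)) with hTc_def
  have hclamp_mem : ∀ t : ℝ, max a (min t b) ∈ Icc a b := fun t =>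
    ⟨le_max_left _ _, max_le hab' (min_le_right t b)⟩
  have hTc_mem : ∀ t, Tc t ∈ Icc c d := fun t => hTmaps (hclamp_mem t)
  have hTc_eq : ∀ t ∈ Icc a b, Tc t = T t := by
    intro t ht
    rw [hTc_def]
    simp only
    rw [min_eq_left ht.2, max_eq_right ht.1]
  have hTc_mono : Monotone Tc := by
    intro s t hst
    have h1 : max a (min s b) ≤ max a (min t b) :=
      max_le_max (le_refl a) (min_le_min hst (le_refl b))
    rcases eq_or_lt_of_le h1 with h | h
    · rw [hTc_def]; simp only; rw [h]
    · exact (hTmono (hclamp_mem s) (hclamp_mem t) h).le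
  have hTc_meas : Measurable Tc := hTc_mono.measurable
  -- measurable version of g
  have hgm : AEMeasurable g (volume.restrict (Icc c d)) := hgint.1.aemeasurable
  set g₀ := hgm.mk g with hg₀_def
  have hg₀ : g =ᵐ[volume.restrict (Icc c d)] g₀ := hgm.ae_eq_mk
  have hg₀m : Measurable g₀ := hgm.measurable_mk
  -- the measures
  set μ := (volume.restrict (Icc a b)).withDensity (fun t => ENNReal.ofReal (f t)) with hμ_def
  set ν := (volume.restrict (Icc c d)).withDensity
      (fun y => ENNReal.ofReal (g₀ y * (A / B))) with hν_def
  have hfnn : ∀ s ∈ Icc a b, (0 : ℝ → ℝ) ≤ᵐ[volume.restrict (Icc a s)] f := by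
    intro s hs
    filter_upwards [ae_restrict_mem measurableSet_Icc] with t ht
    exact (hfpos t ⟨ht.1, ht.2.trans hs.2⟩).le
  have hlint_f : ∀ s ∈ Icc a b,
      ∫⁻ t in Icc a s, ENNReal.ofReal (f t) = ENNReal.ofReal (F s) := by
    intro s hs
    rw [← ofReal_integral_eq_lintegral_ofReal (hfint.mono_set (Icc_subset_Icc_right hs.2))
      (hfnn s hs)]
    congr 1
    rw [hF_def]
    simp only
    rw [intervalIntegral.integral_of_le hs.1, integral_Icc_eq_integral_Ioc]
  have hμ_apply : ∀ E : Set ℝ, MeasurableSet E →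
      μ E = ∫⁻ t in E ∩ Icc a b, ENNReal.ofReal (f t) := by
    intro E hE
    rw [hμ_def, withDensity_apply _ hE, Measure.restrict_restrict hE]
  have hν_apply : ∀ E : Set ℝ, MeasurableSet E →
      ν E = ∫⁻ t in E ∩ Icc c d, ENNReal.ofReal (g₀ t * (A / B)) := by
    intro E hE
    rw [hν_def, withDensity_apply _ hE, Measure.restrict_restrict hE]
  haveI hμfin : IsFiniteMeasure μ := by
    constructor
    rw [hμ_apply univ MeasurableSet.univ, univ_inter, hlint_f b hb_mem]
    exact ENNReal.ofReal_lt_top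
  -- the pushforward identity
  have hmap : μ.map Tc = ν := by
    apply Measure.ext_of_Iic
    intro y
    rw [Measure.map_apply hTc_meas measurableSet_Iic,
        hμ_apply _ (hTc_meas measurableSet_Iic), hν_apply _ measurableSet_Iic]
    by_cases hy : y < c
    · have h1 : Tc ⁻¹' Iic y ∩ Icc a b = ∅ := by
        apply eq_empty_of_forall_notMem
        rintro t ⟨ht1, _⟩
        exact absurd (le_trans (hTc_mem t).1 ht1) (not_le.mpr hy)
      have h2 : Iic y ∩ Icc c d = ∅ := by
        apply eq_empty_of_forall_notMem
        rintro t ⟨ht1, ht2⟩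
        exact absurd (le_trans ht2.1 ht1) (not_le.mpr hy)
      rw [h1, h2]
      simp
    · push_neg at hy
      set m := min y d with hm_def
      have hm : m ∈ Icc c d := ⟨le_min hy hcd', min_le_right _ _⟩
      obtain ⟨s, hs, hBF⟩ := hsur m hm
      have h1 : Tc ⁻¹' Iic y ∩ Icc a b = Icc a s := by
        ext t
        simp only [mem_inter_iff, mem_preimage, mem_Iic, mem_Icc]
        constructor
        · rintro ⟨h2, h3, h4⟩
          refine ⟨h3, ?_⟩
          rw [hTc_eq t ⟨h3, h4⟩] at h2
          have h5 : T t ≤ m := le_min h2 (hTmaps ⟨h3, h4⟩).2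
          have h6 : G (T t) ≤ G m := hGmono.monotoneOn (hTmaps ⟨h3, h4⟩) hm h5
          have h7 : F t ≤ F s := by nlinarith [key t ⟨h3, h4⟩]
          by_contra h8
          push_neg at h8
          exact absurd (hFmono hs ⟨h3, h4⟩ h8) (not_lt.mpr h7)
        · rintro ⟨h3, h4⟩
          have htb : t ∈ Icc a b := ⟨h3, h4.trans hs.2⟩
          refine ⟨?_, h3, h4.trans hs.2⟩
          rw [hTc_eq t htb]
          have h5 : F t ≤ F s := hFmono.monotoneOn htb hs h4
          have h6 : G (T t) ≤ G m := by nlinarith [key t htb]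
          have h7 : T t ≤ m := by
            by_contra h8
            push_neg at h8
            exact absurd (hGmono hm (hTmaps htb) h8) (not_lt.mpr h6)
          exact h7.trans (min_le_left y d)
      have h2 : Iic y ∩ Icc c d = Icc c m := by
        ext t
        simp only [mem_inter_iff, mem_Iic, mem_Icc, hm_def, le_min_iff]
        tauto
      rw [h1, h2, hlint_f s hs]
      have h3 : ∫⁻ t in Icc c m, ENNReal.ofReal (g₀ t * (A / B))
          = ENNReal.ofReal (G m * (A / B)) := by
        have hcongr : ∫⁻ t in Icc c m, ENNReal.ofReal (g₀ t * (A / B))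
            = ∫⁻ t in Icc c m, ENNReal.ofReal (g t * (A / B)) := by
          apply lintegral_congr_ae
          filter_upwards [hg₀.filter_mono
            (ae_mono (Measure.restrict_mono (Icc_subset_Icc_right hm.2) le_rfl))] with t ht
          rw [ht]
        rw [hcongr, ← ofReal_integral_eq_lintegral_ofReal
          ((hgint.mono_set (Icc_subset_Icc_right hm.2)).mul_const _) ?_]
        · congr 1
          rw [integral_mul_const]
          congr 1
          rw [hG_def]
          simp only
          rw [intervalIntegral.integral_of_le hm.1, integral_Icc_eq_integral_Ioc]
        · filter_upwards [ae_restrict_mem measurableSet_Icc] with t ht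
          exact mul_nonneg (hgpos t ⟨ht.1, ht.2.trans hm.2⟩).le (by positivity)
      rw [h3]
      congr 1
      field_simp
      linarith [hBF]
  -- absolute continuity of the plain restricted measure w.r.t. μ
  have hac1 : volume.restrict (Icc a b) ≪ μ := by
    refine Measure.AbsolutelyContinuous.mk fun E hE hEμ => ?_
    rw [hμ_apply E hE] at hEμ
    have hmeasE : MeasurableSet (E ∩ Icc a b) := hE.inter measurableSet_Icc
    have hmeas : AEMeasurable (fun t => ENNReal.ofReal (f t))
        (volume.restrict (E ∩ Icc a b)) :=
      (ENNReal.measurable_ofReal.comp_aemeasurable hfint.1.aemeasurable).mono_measure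
        (Measure.restrict_mono inter_subset_right le_rfl)
    rw [lintegral_eq_zero_iff' hmeas] at hEμ
    have hfalse : ∀ᵐ t ∂volume.restrict (E ∩ Icc a b), False := by
      filter_upwards [ae_restrict_mem hmeasE, hEμ] with t ht h0
      have : 0 < f t := hfpos t ht.2
      simp only [Pi.zero_apply, ENNReal.ofReal_eq_zero] at h0
      linarith
    have h0 : volume (E ∩ Icc a b) = 0 := by
      have := ae_iff.mp hfalse
      simpa using this
    rw [Measure.restrict_apply hE]
    exact h0
  have hac : (volume.restrict (Icc a b)).map Tc ≪ volume.restrict (Icc c d) :=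
    (hac1.map hTc_meas).trans
      (by rw [hmap]; exact withDensity_absolutelyContinuous _ _)
  have hgTc : (fun t => g₀ (Tc t)) =ᵐ[volume.restrict (Icc a b)] fun t => g (Tc t) := by
    have h0 : ∀ᵐ y ∂(volume.restrict (Icc a b)).map Tc, g y = g₀ y :=
      hg₀.filter_mono hac.ae_le
    have h1 := ae_of_ae_map hTc_meas.aemeasurable h0
    filter_upwards [h1] with t ht using ht.symm
  -- the candidate derivative
  set T' := fun t => B / A * f t / g₀ (Tc t) with hT'_def
  set φ := fun y => ENNReal.ofReal (B / A / g₀ y) with hφ_def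
  have hφm : Measurable φ := ENNReal.measurable_ofReal.comp (measurable_const.div hg₀m)
  have hμae : ∀ᵐ t ∂μ, t ∈ Icc a b :=
    (ae_restrict_mem measurableSet_Icc).filter_mono
      (withDensity_absolutelyContinuous _ _).ae_le
  have hLx : ∀ x ∈ Icc a b,
      ∫⁻ t in Icc a x, ENNReal.ofReal (T' t) = ENNReal.ofReal (T x - c) := by
    intro x hx
    have hsub : Icc a x ⊆ Icc a b := Icc_subset_Icc_right hx.2
    have step1 : ∫⁻ t in Icc a x, ENNReal.ofReal (T' t)
        = ∫⁻ t in Icc a x, ENNReal.ofReal (f t) * φ (Tc t) := by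
      apply lintegral_congr_ae
      filter_upwards [ae_restrict_mem measurableSet_Icc] with t ht
      have h1 : 0 ≤ f t := (hfpos t (hsub ht)).le
      have h2 : T' t = f t * (B / A / g₀ (Tc t)) := by rw [hT'_def]; ring
      rw [h2, ENNReal.ofReal_mul h1, hφ_def]
    have hres : (volume.restrict (Icc a b)).restrict (Icc a x) = volume.restrict (Icc a x) := by
      rw [Measure.restrict_restrict measurableSet_Icc, inter_eq_left.mpr hsub]
    have step2 : ∫⁻ t in Icc a x, φ (Tc t) ∂μ
        = ∫⁻ t in Icc a x, ENNReal.ofReal (f t) * φ (Tc t) := by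
      have hcomp : AEMeasurable (fun t => φ (Tc t)) (volume.restrict (Icc a x)) :=
        (hφm.comp hTc_meas).aemeasurable
      rw [hμ_def, restrict_withDensity measurableSet_Icc, hres,
        lintegral_withDensity_eq_lintegral_mul₀ ?_ hcomp]
      · rfl
      · exact (ENNReal.measurable_ofReal.comp_aemeasurable hfint.1.aemeasurable).mono_measure
          (Measure.restrict_mono hsub le_rfl)
    have step3 : ∫⁻ t in Icc a x, φ (Tc t) ∂μ
        = ∫⁻ t, (Iic (T x)).indicator φ (Tc t) ∂μ := by
      rw [← lintegral_indicator measurableSet_Icc]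
      apply lintegral_congr_ae
      filter_upwards [hμae] with t ht
      have hiff : t ∈ Icc a x ↔ Tc t ∈ Iic (T x) := by
        rw [hTc_eq t ht, mem_Iic, mem_Icc]
        constructor
        · intro h
          exact hTmono.monotoneOn ht hx h.2
        · intro h
          refine ⟨ht.1, ?_⟩
          by_contra h8
          push_neg at h8
          exact absurd (hTmono hx ht h8) (not_lt.mpr h)
      by_cases h : t ∈ Icc a x
      · rw [indicator_of_mem h, indicator_of_mem (hiff.mp h)]
      · rw [indicator_of_notMem h, indicator_of_notMem (fun hc => h (hiff.mpr hc))]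
    have step4 : ∫⁻ t, (Iic (T x)).indicator φ (Tc t) ∂μ
        = ∫⁻ y, (Iic (T x)).indicator φ y ∂ν := by
      rw [← hmap, lintegral_map (hφm.indicator measurableSet_Iic) hTc_meas]
    have hTx_mem : T x ∈ Icc c d := hTmaps hx
    have hIic : Iic (T x) ∩ Icc c d = Icc c (T x) := by
      ext t
      simp only [mem_inter_iff, mem_Iic, mem_Icc]
      constructor
      · rintro ⟨h1, h2, h3⟩; exact ⟨h2, h1⟩
      · rintro ⟨h2, h1⟩; exact ⟨h1, h2, h1.trans hTx_mem.2⟩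
    have hressub : (volume.restrict (Icc c d)).restrict (Iic (T x))
        = volume.restrict (Icc c (T x)) := by
      rw [Measure.restrict_restrict measurableSet_Iic, hIic]
    have step5 : ∫⁻ y, (Iic (T x)).indicator φ y ∂ν = ENNReal.ofReal (T x - c) := by
      rw [lintegral_indicator measurableSet_Iic, hν_def,
        restrict_withDensity measurableSet_Iic, hressub,
        lintegral_withDensity_eq_lintegral_mul₀
          ((hg₀m.mul_const _).ennreal_ofReal).aemeasurable hφm.aemeasurable]
      have hone : ∀ᵐ y ∂volume.restrict (Icc c (T x)),
          ((fun y => ENNReal.ofReal (g₀ y * (A / B))) * φ) y = 1 := by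
        filter_upwards [ae_restrict_mem measurableSet_Icc,
          hg₀.filter_mono (ae_mono (Measure.restrict_mono
            (Icc_subset_Icc le_rfl hTx_mem.2) le_rfl))] with y hy hgy
        have hyc : y ∈ Icc c d := ⟨hy.1, hy.2.trans hTx_mem.2⟩
        have hgpos' : 0 < g y := hgpos y hyc
        have hgne : g y ≠ 0 := hgpos'.ne'
        have hAne : A ≠ 0 := hApos.ne'
        have hBne : B ≠ 0 := hBpos.ne'
        simp only [Pi.mul_apply, hφ_def, ← hgy]
        rw [← ENNReal.ofReal_mul (by positivity)]
        rw [show g y * (A / B) * (B / A / g y) = 1 by field_simp]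
        simp
      rw [lintegral_congr_ae hone, setLIntegral_one, Real.volume_Icc]
    rw [step1, ← step2, step3, step4, step5]
  -- nonnegativity a.e.
  have hT'nonneg : ∀ᵐ t ∂volume.restrict (Icc a b), 0 ≤ T' t := by
    filter_upwards [ae_restrict_mem measurableSet_Icc, hgTc] with t ht hgt
    have h1 : 0 < g (Tc t) := hgpos _ (hTc_mem t)
    have h2 : 0 ≤ f t := (hfpos t ht).le
    rw [hT'_def]
    simp only
    rw [hgt]
    positivity
  have hT'meas : AEMeasurable T' (volume.restrict (Icc a b)) := by
    rw [hT'_def]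
    exact (aemeasurable_const.mul hfint.1.aemeasurable).div
      ((hg₀m.comp hTc_meas).aemeasurable)
  have hT'int : IntegrableOn T' (Icc a b) := by
    refine ⟨hT'meas.aestronglyMeasurable, ?_⟩
    rw [hasFiniteIntegral_iff_norm]
    have hcg : ∫⁻ t in Icc a b, ENNReal.ofReal ‖T' t‖
        = ∫⁻ t in Icc a b, ENNReal.ofReal (T' t) := by
      apply lintegral_congr_ae
      filter_upwards [hT'nonneg] with t ht
      rw [Real.norm_of_nonneg ht]
    rw [hcg, hLx b hb_mem]
    exact ENNReal.ofReal_lt_top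
  -- the fundamental theorem of calculus identity
  have hFTC : ∀ x ∈ Icc a b, T x = T a + ∫ t in a..x, T' t := by
    intro x hx
    have hsub : Icc a x ⊆ Icc a b := Icc_subset_Icc_right hx.2
    have hresle : volume.restrict (Icc a x) ≤ volume.restrict (Icc a b) :=
      Measure.restrict_mono hsub le_rfl
    have h1 : ∫ t in a..x, T' t = T x - c := by
      rw [intervalIntegral.integral_of_le hx.1, ← integral_Icc_eq_integral_Ioc]
      rw [integral_eq_lintegral_of_nonneg_ae (hT'nonneg.filter_mono (ae_mono hresle))
        (hT'meas.aestronglyMeasurable.mono_measure hresle)]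
      rw [hLx x hx, ENNReal.toReal_ofReal (sub_nonneg.mpr (hTmaps hx).1)]
    rw [h1, hTa]
    ring
  -- assemble
  refine ⟨T', hT'int, hFTC, ?_⟩
  filter_upwards [ae_restrict_mem measurableSet_Icc, hgTc] with x hxm hgx
  rw [hT'_def]
  simp only
  rw [hgx, hTc_eq x hxm]
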